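/- Let M = ⊕_{i ∈ ℤ} M_i be a ℤ-graded module over the polynomial ring ℝ[t] (t homogeneous of degree 1, so t · M_i ⊆ M_{i+1}) such that each M_i is a finite-dimensional real vector space. Assume: (1) there exists α ∈ ℤ with M_i = 0 for all i < α; (2) for every i ∈ ℤ, multiplication by t gives an injective map M_i → M_{i+1}; (3) there exists β ∈ ℤ such that for every i > β, multiplication by t gives an isomorphism M_i → M_{i+1}. Then M is graded free over ℝ[t]: it admits a finite ℝ[t]-basis consisting of homogeneous elements. -/

import Mathlib

open Polynomial Submodule

/-- A persistence module over `ℝ` indexed by `ℤ`, viewed as a `ℤ`-graded module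
`M = ⊕_{i ∈ ℤ} M_i` over the polynomial ring `ℝ[t]` (with `t` homogeneous of degree `1`,
so `t • M_i ⊆ M_{i+1}`), with every graded piece finite dimensional, is graded free
(it admits a finite `ℝ[t]`-basis of homogeneous elements) provided that:
(1) `M_i = 0` for `i < α`;
(2) multiplication by `t` is injective `M_i → M_{i+1}` for every `i`;
(3) multiplication by `t` is an isomorphism `M_i → M_{i+1}` (i.e. also surjective)
for every `i > β`. -/
theorem int_indexed_graded_free
    (M : Type) [AddCommGroup M] [Module ℝ M] [Module (Polynomial ℝ) M]
    [IsScalarTower ℝ (Polynomial ℝ) M]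
    (ℳ : ℤ → Submodule ℝ M) (hinternal : DirectSum.IsInternal ℳ)
    (hsmul : ∀ (i : ℤ) (x : M), x ∈ ℳ i → (Polynomial.X : Polynomial ℝ) • x ∈ ℳ (i + 1))
    (hfin : ∀ i : ℤ, FiniteDimensional ℝ ↥(ℳ i))
    (α : ℤ) (hα : ∀ i : ℤ, i < α → ℳ i = ⊥)
    (hinj : ∀ (i : ℤ) (x y : M), x ∈ ℳ i → y ∈ ℳ i →
      (Polynomial.X : Polynomial ℝ) • x = (Polynomial.X : Polynomial ℝ) • y → x = y)
    (β : ℤ) (hsurj : ∀ i : ℤ, β < i → ∀ z ∈ ℳ (i + 1), ∃ x ∈ ℳ i,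
      (Polynomial.X : Polynomial ℝ) • x = z) :
    ∃ (m : ℕ) (dg : Fin m → ℤ) (b : Module.Basis (Fin m) (Polynomial ℝ) M),
      ∀ j, b j ∈ ℳ (dg j) := by
  classical
  haveI := hfin
  -- multiplication by X as an ℝ-linear map
  let T : M →ₗ[ℝ] M :=
    { toFun := fun x => (X : ℝ[X]) • x
      map_add' := fun x y => smul_add _ x y
      map_smul' := fun r x => smul_comm (X : ℝ[X]) r x }
  have hT : ∀ x : M, T x = (X : ℝ[X]) • x := fun _ => rfl
  -- images
  let Im : ℤ → Submodule ℝ M := fun d => (ℳ (d - 1)).map T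
  have hIm : ∀ d, Im d ≤ ℳ d := by
    rintro d x ⟨y, hy, rfl⟩
    have h := hsmul (d - 1) y hy
    rw [sub_add_cancel] at h
    exact h
  -- complements
  choose W hW using fun d => Submodule.exists_isCompl ((Im d).comap (ℳ d).subtype)
  let n : ℤ → ℕ := fun d => Module.finrank ℝ ↥(W d)
  let c : ∀ d, Module.Basis (Fin (n d)) ℝ ↥(W d) := fun d => Module.finBasis ℝ _
  let K' := Σ i : ℤ, Fin (n i)
  let bb : K' → M := fun k => (((c k.1 k.2 : ↥(W k.1)) : ↥(ℳ k.1)) : M)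
  have hbbmem : ∀ k : K', bb k ∈ ℳ k.1 := fun k => ((c k.1 k.2 : ↥(ℳ k.1))).2
  let v : K' × ℕ → M := fun p => ((X : ℝ[X]) ^ p.2) • bb p.1
  have hv0 : ∀ k, v (k, 0) = bb k := by intro k; simp [v]
  have hvS : ∀ k m, v (k, m + 1) = T (v (k, m)) := by
    intro k m
    show ((X : ℝ[X]) ^ (m + 1)) • bb k = (X : ℝ[X]) • ((X : ℝ[X]) ^ m) • bb k
    rw [pow_succ', mul_smul]
  have hvmem : ∀ p : K' × ℕ, v p ∈ ℳ (p.1.1 + p.2) := by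
    rintro ⟨k, m⟩
    induction m with
    | zero => simpa [hv0] using hbbmem k
    | succ m ih =>
      have h2 := hsmul _ _ ih
      rw [hvS, hT]
      convert h2 using 2
      push_cast
      ring
  -- vanishing of n outside [α, β+1]
  have hn_low : ∀ i : ℤ, i < α → n i = 0 := by
    intro i hi
    haveI : Subsingleton ↥(ℳ i) := by rw [hα i hi]; infer_instance
    exact Module.finrank_zero_of_subsingleton
  have hIm_top : ∀ d : ℤ, β + 1 < d → (Im d).comap (ℳ d).subtype = ⊤ := by
    intro d hd
    rw [eq_top_iff]
    rintro ⟨z, hz⟩ -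
    obtain ⟨x, hx, hxz⟩ := hsurj (d - 1) (by omega) z (by rwa [sub_add_cancel])
    exact ⟨x, hx, hxz⟩
  have hn_high : ∀ i : ℤ, β + 1 < i → n i = 0 := by
    intro i hi
    have h1 : W i = ⊥ := by
      have h2 := (hW i).disjoint
      rw [hIm_top i hi] at h2
      exact top_disjoint.mp h2
    rw [show n i = Module.finrank ℝ ↥(W i) from rfl, h1]
    exact finrank_bot ℝ _
  -- disjointness of graded pieces with ker T
  have hdisjT : ∀ j : ℤ, Disjoint (ℳ j) (LinearMap.ker T) := by
    intro j
    rw [disjoint_iff_inf_le]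
    rintro x ⟨hx1, hx2⟩
    have : (X : ℝ[X]) • x = (X : ℝ[X]) • (0 : M) := by
      rw [smul_zero]
      exact hx2
    exact hinj j x 0 hx1 (zero_mem _) this
  -- the key induction
  let I : ℤ → Type := fun d => { p : K' × ℕ // p.1.1 + (p.2 : ℤ) = d }
  have key : ∀ d : ℤ, LinearIndependent ℝ (fun p : I d => v p.1) ∧
      span ℝ (Set.range fun p : I d => v p.1) = ℳ d := by
    have main : ∀ N : ℕ, ∀ d : ℤ, d < α + N →
        LinearIndependent ℝ (fun p : I d => v p.1) ∧
        span ℝ (Set.range fun p : I d => v p.1) = ℳ d := by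
      intro N
      induction N with
      | zero =>
        intro d hd
        haveI : IsEmpty (I d) := by
          constructor
          rintro ⟨⟨⟨i, j⟩, m⟩, hp⟩
          have h1 : n i ≠ 0 := by
            intro h
            rw [h] at j
            exact j.elim0
          have h2 : ¬ i < α := fun h => h1 (hn_low i h)
          simp only at hp
          omega
        refine ⟨linearIndependent_empty_type, ?_⟩
        rw [Set.range_eq_empty, span_empty, hα d (by omega)]
      | succ N ih =>
        intro d hd
        rcases lt_or_ge d (α + N) with hcase | hcase
        · exact ih d hcase
        have prev := ih (d - 1) (by omega)
        -- split equivalence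
        let e : Fin (n d) ⊕ I (d - 1) → I d := fun q =>
          match q with
          | Sum.inl j => ⟨(⟨d, j⟩, 0), by simp⟩
          | Sum.inr ⟨⟨k, m⟩, hp⟩ => ⟨(k, m + 1), by push_cast at hp ⊢; omega⟩
        have he2 : Function.Surjective e := by
          rintro ⟨⟨⟨i, j⟩, m⟩, hp⟩
          cases m with
          | zero =>
            have hid : i = d := by simpa using hp
            subst hid
            exact ⟨Sum.inl j, rfl⟩
          | succ m =>
            refine ⟨Sum.inr ⟨(⟨i, j⟩, m), by push_cast at hp ⊢; omega⟩, ?_⟩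
            rfl
        -- the composed family
        have hfeq : (fun p : I d => v p.1) ∘ e =
            Sum.elim (fun j : Fin (n d) => bb ⟨d, j⟩) (fun q : I (d - 1) => T (v q.1)) := by
          funext q
          rcases q with j | ⟨⟨k, m⟩, hp⟩
          · exact hv0 _
          · exact hvS k m
        -- left family
        have hleft : LinearIndependent ℝ (fun j : Fin (n d) => bb ⟨d, j⟩) := by
          have h1 := ((c d).linearIndependent.map' (W d).subtype (ker_subtype _)).map'
            (ℳ d).subtype (ker_subtype _)
          exact h1
        have hleftspan : span ℝ (Set.range fun j : Fin (n d) => bb ⟨d, j⟩) =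
            (W d).map (ℳ d).subtype := by
          have h1 : (Set.range fun j : Fin (n d) => bb ⟨d, j⟩) =
              (ℳ d).subtype '' ((W d).subtype '' Set.range (c d)) := by
            rw [← Set.range_comp, ← Set.range_comp]
            rfl
          rw [h1, span_image, span_image, Module.Basis.span_eq, Submodule.map_top, range_subtype]
        -- right family
        have hright : LinearIndependent ℝ (fun q : I (d - 1) => T (v q.1)) := by
          have h1 := prev.1.map (f := T) (by rw [prev.2]; exact hdisjT (d - 1))
          exact h1
        have hrightspan : span ℝ (Set.range fun q : I (d - 1) => T (v q.1)) = Im d := by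
          have h1 : (Set.range fun q : I (d - 1) => T (v q.1)) =
              T '' Set.range (fun q : I (d - 1) => v q.1) := by
            rw [← Set.range_comp]; rfl
          rw [h1, span_image, prev.2]
        -- disjointness
        have hdisj : Disjoint ((W d).map (ℳ d).subtype) (Im d) := by
          rw [disjoint_iff_inf_le]
          rintro x ⟨hx1, hx2⟩
          obtain ⟨y, hy, rfl⟩ := hx1
          have hy2 : y ∈ (Im d).comap (ℳ d).subtype := hx2
          have := (hW d).disjoint
          rw [disjoint_iff_inf_le] at this
          have h0 : y = 0 := by simpa using this ⟨hy2, hy⟩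
          simp [h0]
        constructor
        · have hsum := hleft.sum_type hright (by rw [hleftspan, hrightspan]; exact hdisj)
          have hcomp : (fun p : I d => v p.1) =
              (Sum.elim (fun j : Fin (n d) => bb ⟨d, j⟩) (fun q : I (d - 1) => T (v q.1))) ∘
                Function.surjInv he2 := by
            funext p
            have h5 := congrFun hfeq (Function.surjInv he2 p)
            simp only [Function.comp_apply] at h5 ⊢
            rw [← h5, Function.rightInverse_surjInv he2 p]
          rw [hcomp]
          exact hsum.comp _ (Function.injective_surjInv he2)
        · rw [← he2.range_comp (fun p : I d => v p.1), hfeq,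
            Set.Sum.elim_range, span_union, hleftspan, hrightspan]
          have h2 := (hW d).sup_eq_top
          have h3 := congrArg (Submodule.map (ℳ d).subtype) h2
          rw [Submodule.map_sup, Submodule.map_top, range_subtype, map_comap_subtype,
            inf_eq_right.mpr (hIm d)] at h3
          rw [sup_comm]
          exact h3
    intro d
    exact main (d - α + 1).toNat d (by omega)
  -- per-piece bases
  let bd : ∀ d : ℤ, Module.Basis (I d) ℝ ↥(ℳ d) := fun d =>
    (Module.Basis.span (key d).1).map (LinearEquiv.ofEq _ _ (key d).2)
  have hbd : ∀ (d : ℤ) (p : I d), (bd d p : M) = v p.1 := by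
    intro d p
    show ((LinearEquiv.ofEq _ _ (key d).2) (Module.Basis.span (key d).1 p) : M) = v p.1
    rw [LinearEquiv.coe_ofEq_apply]
    exact congrArg Subtype.val (Module.Basis.span_apply (hli := (key d).1) p)
  let B := hinternal.collectedBasis bd
  have hB : ∀ a : Σ d : ℤ, I d, B a = v a.2.1 := by
    intro a
    rw [show (B a : M) = ((bd a.1 a.2 : ↥(ℳ a.1)) : M) from congrFun (hinternal.collectedBasis_coe bd) a]
    exact hbd a.1 a.2
  -- global ℝ-linear independence and span
  let σ : (Σ d : ℤ, I d) ≃ K' × ℕ := Equiv.ofBijective (fun a => a.2.1) (by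
    constructor
    · rintro ⟨d₁, ⟨p₁, h₁⟩⟩ ⟨d₂, ⟨p₂, h₂⟩⟩ h
      simp only at h
      subst h
      have : d₁ = d₂ := by rw [← h₁, ← h₂]
      subst this
      rfl
    · rintro p
      exact ⟨⟨_, p, rfl⟩, rfl⟩)
  have hliR : LinearIndependent ℝ v := by
    refine (linearIndependent_equiv σ).mp ?_
    have h2 : (v ∘ σ) = ⇑B := funext fun a => (hB a).symm
    rw [h2]
    exact B.linearIndependent
  have hspanR : span ℝ (Set.range v) = ⊤ := by
    rw [eq_top_iff, ← B.span_eq]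
    apply span_mono
    rintro x ⟨a, rfl⟩
    exact ⟨σ a, (hB a).symm⟩
  -- ℝ[X]-linear independence
  have hbbX : LinearIndependent (Polynomial ℝ) bb := by
    rw [linearIndependent_iff']
    intro s g hg k hk
    set N := (s.sup fun k => (g k).natDegree) + 1 with hN
    have hdeg : ∀ k ∈ s, (g k).natDegree < N := fun k hk =>
      Nat.lt_succ_of_le (Finset.le_sup (f := fun k => (g k).natDegree) hk)
    have hsum : ∑ p ∈ s ×ˢ Finset.range N, ((g p.1).coeff p.2) • v p = 0 := by
      rw [Finset.sum_product]
      have hstep : ∀ k ∈ s, ∑ m ∈ Finset.range N, ((g k).coeff m) • v (k, m) = g k • bb k := by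
        intro k hk
        conv_rhs => rw [(g k).as_sum_range' N (hdeg k hk)]
        rw [Finset.sum_smul]
        refine Finset.sum_congr rfl fun m _ => ?_
        show ((g k).coeff m) • ((X : ℝ[X]) ^ m • bb k) = (monomial m ((g k).coeff m)) • bb k
        rw [← C_mul_X_pow_eq_monomial, mul_smul, ← Polynomial.algebraMap_eq, algebraMap_smul]
      rw [Finset.sum_congr rfl hstep, hg]
    have hco := linearIndependent_iff'.mp hliR (s ×ˢ Finset.range N)
      (fun p => (g p.1).coeff p.2) hsum
    ext m
    rw [Polynomial.coeff_zero]
    by_cases hm : m < N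
    · exact hco (k, m) (Finset.mem_product.mpr ⟨hk, Finset.mem_range.mpr hm⟩)
    · exact Polynomial.coeff_eq_zero_of_natDegree_lt (by have := hdeg k hk; omega)
  -- ℝ[X]-span
  have hbbspan : ⊤ ≤ span (Polynomial ℝ) (Set.range bb) := by
    intro x _
    have hx : x ∈ span ℝ (Set.range v) := hspanR ▸ mem_top
    have hsub : Set.range v ⊆ (span (Polynomial ℝ) (Set.range bb) : Set M) := by
      rintro - ⟨⟨k, m⟩, rfl⟩
      exact Submodule.smul_mem _ _ (subset_span ⟨k, rfl⟩)
    exact (span_le.mpr hsub :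
      span ℝ (Set.range v) ≤ (span (Polynomial ℝ) (Set.range bb)).restrictScalars ℝ) hx
  let Bx : Module.Basis K' (Polynomial ℝ) M := Module.Basis.mk hbbX hbbspan
  -- finiteness of the index
  let K := Σ i : (Finset.Icc α (β + 1) : Finset ℤ), Fin (n i.1)
  let eK : K → K' := fun q => ⟨q.1.1, q.2⟩
  have heK : Function.Bijective eK := by
    constructor
    · rintro ⟨⟨i₁, hi₁⟩, j₁⟩ ⟨⟨i₂, hi₂⟩, j₂⟩ h
      obtain ⟨h1, h2⟩ := Sigma.mk.inj_iff.mp h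
      subst h1
      rw [show j₁ = j₂ from by simpa using h2]
    · rintro ⟨i, j⟩
      have hi : i ∈ Finset.Icc α (β + 1) := by
        by_contra hcon
        rw [Finset.mem_Icc] at hcon
        have hni : n i = 0 := by
          rcases lt_or_ge i α with h | h
          · exact hn_low i h
          · exact hn_high i (by omega)
        have := j.isLt
        omega
      exact ⟨⟨⟨i, hi⟩, j⟩, rfl⟩
  let EK := Equiv.ofBijective eK heK
  let EF : Fin (Fintype.card K) ≃ K := (Fintype.equivFin K).symm
  refine ⟨Fintype.card K, fun j => (eK (EF j)).1, Bx.reindex (EF.trans EK).symm, fun j => ?_⟩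
  rw [Module.Basis.reindex_apply, Equiv.symm_symm]
  show Bx (eK (EF j)) ∈ _
  rw [show Bx (eK (EF j)) = bb (eK (EF j)) from Module.Basis.mk_apply _ _ _]
  exact hbbmem _
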